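/- arXiv:2407.16936 — 3 statements merged into one kernel-verified Lean document; each statement's English description precedes it below -/
import Mathlib

section
/- For a Gaussian mixture distribution π = Σᵢ wᵢ N(μᵢ, σ²I) on ℝ^d with positive weights summing to 1, the negative log-density satisfies -∇² log π ⪯ (1/σ²) I. -/
open Real

section Aux

variable {E : Type*} [NormedAddCommGroup E] [InnerProductSpace ℝ E]

local notation "⟪" x ", " y "⟫" => @inner ℝ _ _ x y

lemma aux_sub_const (m z : E) : HasFDerivAt (fun z : E => z - m) (ContinuousLinearMap.id ℝ E) z := by
  simpa using (hasFDerivAt_id z).sub_const m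

lemma aux_gauss (m : E) {s : ℝ} (a : ℝ) (hs : s ≠ 0) (z : E) :
    HasFDerivAt (fun z : E => a * Real.exp (-‖z - m‖ ^ 2 / (2 * s)))
      ((a * Real.exp (-‖z - m‖ ^ 2 / (2 * s)) * (-s⁻¹)) • innerSL ℝ (z - m)) z := by
  have h3 := ((((aux_sub_const m z).norm_sq.neg).mul_const (2 * s)⁻¹).exp.const_mul a)
  refine h3.congr_fderiv ?_
  ext u
  simp only [ContinuousLinearMap.smul_apply, innerSL_apply_apply, ContinuousLinearMap.coe_smul',
    Pi.smul_apply, ContinuousLinearMap.coe_comp', Function.comp_apply,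
    ContinuousLinearMap.neg_apply, ContinuousLinearMap.coe_id', id_eq, smul_eq_mul,
    ContinuousLinearMap.coe_neg', Pi.neg_apply, nsmul_eq_mul, Nat.cast_ofNat,
    div_eq_mul_inv]
  field_simp

lemma aux_inner (m v z : E) :
    HasFDerivAt (fun z : E => ⟪z - m, v⟫) (innerSL ℝ v) z := by
  have := (aux_sub_const m z).inner ℝ (hasFDerivAt_const v z)
  refine this.congr_fderiv ?_
  ext u
  simp [fderivInnerCLM_apply, real_inner_comm]

lemma aux_main {N : ℕ} (hN : 0 < N) {s : ℝ} (hs : 0 < s)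
    (a : Fin N → ℝ) (ha : ∀ i, 0 < a i) (μ : Fin N → E) (x v : E) :
    (fderiv ℝ (fun y => fderiv ℝ
      (fun z => -Real.log (∑ i, a i * Real.exp (-‖z - μ i‖ ^ 2 / (2 * s)))) y v) x) v
      ≤ s⁻¹ * ‖v‖ ^ 2 := by
  have hNe : Nonempty (Fin N) := ⟨⟨0, hN⟩⟩
  have hfpos : ∀ z : E, 0 < ∑ i, a i * Real.exp (-‖z - μ i‖ ^ 2 / (2 * s)) := fun z =>
    Finset.sum_pos (fun i _ => mul_pos (ha i) (Real.exp_pos _)) Finset.univ_nonempty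
  have hfD : ∀ z : E, HasFDerivAt (fun z : E => ∑ i, a i * Real.exp (-‖z - μ i‖ ^ 2 / (2 * s)))
      (∑ i, (a i * Real.exp (-‖z - μ i‖ ^ 2 / (2 * s)) * (-s⁻¹)) • innerSL ℝ (z - μ i)) z :=
    fun z => HasFDerivAt.fun_sum fun i _ => aux_gauss (μ i) (a i) hs.ne' z
  have key : (fun y => fderiv ℝ
      (fun z => -Real.log (∑ i, a i * Real.exp (-‖z - μ i‖ ^ 2 / (2 * s)))) y v)
      = fun y => (∑ i, (a i * Real.exp (-‖y - μ i‖ ^ 2 / (2 * s))) * ⟪y - μ i, v⟫) *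
          (s⁻¹ * (∑ i, a i * Real.exp (-‖y - μ i‖ ^ 2 / (2 * s)))⁻¹) := by
    funext y
    have hnl := (((hfD y).log (hfpos y).ne')).fun_neg
    rw [hnl.fderiv]
    simp only [ContinuousLinearMap.neg_apply, ContinuousLinearMap.smul_apply,
      ContinuousLinearMap.coe_sum', Finset.sum_apply, innerSL_apply_apply, smul_eq_mul]
    rw [Finset.mul_sum, ← Finset.sum_neg_distrib, Finset.sum_mul]
    exact Finset.sum_congr rfl fun i _ => by ring
  rw [key]
  have hA : HasFDerivAt (fun y : E => ∑ i, (a i * Real.exp (-‖y - μ i‖ ^ 2 / (2 * s))) * ⟪y - μ i, v⟫)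
      (∑ i, ((a i * Real.exp (-‖x - μ i‖ ^ 2 / (2 * s))) • innerSL ℝ v +
        ⟪x - μ i, v⟫ • (a i * Real.exp (-‖x - μ i‖ ^ 2 / (2 * s)) * (-s⁻¹)) • innerSL ℝ (x - μ i))) x :=
    HasFDerivAt.fun_sum fun i _ => (aux_gauss (μ i) (a i) hs.ne' x).mul (aux_inner (μ i) v x)
  have hB : HasFDerivAt (fun y : E => s⁻¹ * (∑ i, a i * Real.exp (-‖y - μ i‖ ^ 2 / (2 * s)))⁻¹)
      (s⁻¹ • ((-((∑ i, a i * Real.exp (-‖x - μ i‖ ^ 2 / (2 * s))) ^ 2)⁻¹) •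
        (∑ i, (a i * Real.exp (-‖x - μ i‖ ^ 2 / (2 * s)) * (-s⁻¹)) • innerSL ℝ (x - μ i)))) x :=
    (((hasDerivAt_inv (hfpos x).ne').comp_hasFDerivAt x (hfD x)).const_mul s⁻¹)
  have hF := hA.fun_mul hB
  rw [hF.fderiv]
  simp only [ContinuousLinearMap.add_apply, ContinuousLinearMap.smul_apply,
    ContinuousLinearMap.coe_sum', Finset.sum_apply, innerSL_apply_apply, smul_eq_mul,
    ContinuousLinearMap.neg_apply, ContinuousLinearMap.coe_smul', Pi.smul_apply]
  have e1 : ∑ i : Fin N, a i * rexp (-‖x - μ i‖ ^ 2 / (2 * s)) * -s⁻¹ * ⟪x - μ i, v⟫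
      = -s⁻¹ * ∑ i : Fin N, a i * rexp (-‖x - μ i‖ ^ 2 / (2 * s)) * ⟪x - μ i, v⟫ := by
    rw [Finset.mul_sum]; exact Finset.sum_congr rfl fun i _ => by ring
  have e2 : ∑ i : Fin N, (a i * rexp (-‖x - μ i‖ ^ 2 / (2 * s)) * ⟪v, v⟫ +
        ⟪x - μ i, v⟫ * (a i * rexp (-‖x - μ i‖ ^ 2 / (2 * s)) * -s⁻¹ * ⟪x - μ i, v⟫))
      = ‖v‖ ^ 2 * (∑ i : Fin N, a i * rexp (-‖x - μ i‖ ^ 2 / (2 * s)))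
        - s⁻¹ * ∑ i : Fin N, a i * rexp (-‖x - μ i‖ ^ 2 / (2 * s)) * ⟪x - μ i, v⟫ ^ 2 := by
    rw [Finset.mul_sum, Finset.mul_sum, ← Finset.sum_sub_distrib]
    exact Finset.sum_congr rfl fun i _ => by
      rw [real_inner_self_eq_norm_sq]; ring
  rw [e1, e2]
  set F := ∑ i : Fin N, a i * rexp (-‖x - μ i‖ ^ 2 / (2 * s)) with hFdef
  set A := ∑ i : Fin N, a i * rexp (-‖x - μ i‖ ^ 2 / (2 * s)) * ⟪x - μ i, v⟫ with hAdef
  set S2 := ∑ i : Fin N, a i * rexp (-‖x - μ i‖ ^ 2 / (2 * s)) * ⟪x - μ i, v⟫ ^ 2 with hS2def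
  have hFpos : 0 < F := hfpos x
  have hCS : A ^ 2 ≤ F * S2 := by
    rw [hAdef, hFdef, hS2def]
    exact Finset.sum_sq_le_sum_mul_sum_of_sq_eq_mul Finset.univ
      (fun i _ => le_of_lt (mul_pos (ha i) (Real.exp_pos _)))
      (fun i _ => mul_nonneg (le_of_lt (mul_pos (ha i) (Real.exp_pos _))) (sq_nonneg _))
      (fun i _ => by ring)
  have heq : A * (s⁻¹ * (-(F ^ 2)⁻¹ * (-s⁻¹ * A))) + s⁻¹ * F⁻¹ * (‖v‖ ^ 2 * F - s⁻¹ * S2)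
      = s⁻¹ * ‖v‖ ^ 2 + (A ^ 2 - F * S2) * (s ^ 2 * F ^ 2)⁻¹ := by
    field_simp
    ring
  rw [heq]
  have hle : (A ^ 2 - F * S2) * (s ^ 2 * F ^ 2)⁻¹ ≤ 0 :=
    mul_nonpos_of_nonpos_of_nonneg (by linarith) (by positivity)
  linarith

end Aux

/-- For a Gaussian mixture `π = Σᵢ wᵢ N(μᵢ, σ²I)` on `ℝ^d`,
`-∇² log π ⪯ (1/σ²) I`, stated as a directional second-derivative bound on `-log π`. -/
theorem stmt_4 (d N : ℕ) (hN : 0 < N) (σ : ℝ) (hσ : 0 < σ)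
    (w : Fin N → ℝ) (hw : ∀ i, 0 < w i) (hsum : ∑ i, w i = 1)
    (μ : Fin N → EuclideanSpace ℝ (Fin d)) :
    ∀ x v : EuclideanSpace ℝ (Fin d),
      (fderiv ℝ (fun y => fderiv ℝ
        (fun z => -Real.log (∑ i, w i *
          ((2 * Real.pi * σ ^ 2) ^ (-(d : ℝ) / 2) *
            Real.exp (-‖z - μ i‖ ^ 2 / (2 * σ ^ 2))))) y v) x) v
      ≤ (1 / σ ^ 2) * ‖v‖ ^ 2 := by
  intro x v
  have h := aux_main (E := EuclideanSpace ℝ (Fin d)) hN (s := σ ^ 2) (by positivity)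
    (fun i => w i * (2 * Real.pi * σ ^ 2) ^ (-(d : ℝ) / 2))
    (fun i => mul_pos (hw i) (Real.rpow_pos_of_pos (by positivity) _)) μ x v
  rw [one_div]
  simpa only [mul_assoc] using h
end

section
/- For a Gaussian mixture distribution π = Σᵢ wᵢ N(μᵢ, σ²I) on ℝ^d, the negative log-density satisfies -∇² log π ⪰ (1/σ² - max_{i,j} ‖μᵢ - μⱼ‖² / (2σ⁴)) I. -/
open Real
open scoped RealInnerProductSpace

lemma var_bound_aux {N : ℕ} (a s : Fin N → ℝ) (K : ℝ) (ha : ∀ i, 0 ≤ a i)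
    (hK : ∀ i j, (s i - s j) ^ 2 ≤ K) :
    (∑ i, a i * s i ^ 2) * (∑ i, a i) - (∑ i, a i * s i) ^ 2 ≤ K / 2 * (∑ i, a i) ^ 2 := by
  have e1 := Finset.sum_mul_sum (Finset.univ (α := Fin N)) Finset.univ (fun i => a i * s i ^ 2) a
  have e2 := Finset.sum_mul_sum (Finset.univ (α := Fin N)) Finset.univ a (fun j => a j * s j ^ 2)
  have e3 := Finset.sum_mul_sum (Finset.univ (α := Fin N)) Finset.univ (fun i => a i * s i)
      (fun j => 2 * (a j * s j))
  have split : ∑ i, ∑ j, (a i * a j) * (s i - s j) ^ 2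
      = (∑ i, ∑ j, (a i * s i ^ 2) * a j) + (∑ i, ∑ j, a i * (a j * s j ^ 2))
        - ∑ i, ∑ j, (a i * s i) * (2 * (a j * s j)) := by
    rw [← Finset.sum_add_distrib, ← Finset.sum_sub_distrib]
    refine Finset.sum_congr rfl fun i _ => ?_
    rw [← Finset.sum_add_distrib, ← Finset.sum_sub_distrib]
    exact Finset.sum_congr rfl fun j _ => by ring
  have h2 : ∑ i, ∑ j, (a i * a j) * (s i - s j) ^ 2
      = 2 * ((∑ i, a i * s i ^ 2) * (∑ i, a i) - (∑ i, a i * s i) ^ 2) := by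
    rw [split, ← e1, ← e2, ← e3, ← Finset.mul_sum]
    ring
  have hb : ∑ i, ∑ j, (a i * a j) * (s i - s j) ^ 2 ≤ ∑ i, ∑ j, (a i * a j) * K :=
    Finset.sum_le_sum fun i _ => Finset.sum_le_sum fun j _ =>
      mul_le_mul_of_nonneg_left (hK i j) (mul_nonneg (ha i) (ha j))
  have hKA : ∑ i : Fin N, ∑ j : Fin N, (a i * a j) * K = ((∑ i, a i) * (∑ i, a i)) * K := by
    rw [Finset.sum_mul_sum, Finset.sum_mul]
    exact Finset.sum_congr rfl fun i _ => by rw [Finset.sum_mul]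
  nlinarith [h2, hb, hKA]

/-- For a Gaussian mixture `π = Σᵢ wᵢ N(μᵢ, σ²I)` on `ℝ^d`, if `D` bounds all
squared pairwise distances of the means (in particular for `D = max_{i,j}‖μᵢ-μⱼ‖²`),
then `-∇² log π ⪰ (1/σ² - D/(2σ⁴)) I`. -/
theorem stmt_5 (d N : ℕ) (hN : 0 < N) (σ D : ℝ) (hσ : 0 < σ)
    (w : Fin N → ℝ) (hw : ∀ i, 0 < w i) (hsum : ∑ i, w i = 1)
    (μ : Fin N → EuclideanSpace ℝ (Fin d))
    (hD : ∀ i j, ‖μ i - μ j‖ ^ 2 ≤ D) :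
    ∀ x v : EuclideanSpace ℝ (Fin d),
      (1 / σ ^ 2 - D / (2 * σ ^ 4)) * ‖v‖ ^ 2 ≤
      (fderiv ℝ (fun y => fderiv ℝ
        (fun z => -Real.log (∑ i, w i *
          ((2 * Real.pi * σ ^ 2) ^ (-(d : ℝ) / 2) *
            Real.exp (-‖z - μ i‖ ^ 2 / (2 * σ ^ 2))))) y v) x) v := by
  intro x v
  have hQ : (0:ℝ) < σ ^ 2 := by positivity
  set c : ℝ := (2 * Real.pi * σ ^ 2) ^ (-(d : ℝ) / 2) with hc
  have hcpos : 0 < c := Real.rpow_pos_of_pos (by positivity) _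
  set a : Fin N → EuclideanSpace ℝ (Fin d) → ℝ :=
    fun i z => w i * (c * Real.exp (-‖z - μ i‖ ^ 2 / (2 * σ ^ 2))) with ha
  set g : EuclideanSpace ℝ (Fin d) → ℝ := fun z => ∑ i, a i z with hg
  have hapos : ∀ i z, 0 < a i z := fun i z =>
    mul_pos (hw i) (mul_pos hcpos (Real.exp_pos _))
  have hgpos : ∀ z, 0 < g z := fun z =>
    Finset.sum_pos (fun i _ => hapos i z) ⟨⟨0, hN⟩, Finset.mem_univ _⟩
  -- derivative of each component
  have hda : ∀ (i : Fin N) (z : EuclideanSpace ℝ (Fin d)),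
      HasFDerivAt (a i) ((-(a i z) / σ ^ 2) • (innerSL ℝ (z - μ i))) z := by
    intro i z
    have h1 : HasFDerivAt (fun y : EuclideanSpace ℝ (Fin d) => ‖y - μ i‖ ^ 2)
        (2 • (innerSL ℝ (z - μ i))) z := by
      simpa using ((hasFDerivAt_id z).sub_const (μ i)).norm_sq
    have h2 := ((h1.neg.mul_const ((2 * σ ^ 2)⁻¹)).exp).const_mul (w i * c)
    have hfun : (fun y : EuclideanSpace ℝ (Fin d) =>
        w i * c * Real.exp (-‖y - μ i‖ ^ 2 * (2 * σ ^ 2)⁻¹)) = a i := by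
      funext y; rw [ha]; simp only; rw [div_eq_mul_inv]; ring
    simp only [Pi.neg_apply] at h2
    rw [hfun] at h2
    apply h2.congr_fderiv
    ext u
    simp only [ha, ContinuousLinearMap.smul_apply, ContinuousLinearMap.neg_apply, smul_eq_mul,
      innerSL_apply_apply, ContinuousLinearMap.coe_smul', Pi.smul_apply, div_eq_mul_inv]
    ring
  -- derivative of g
  have hdg : ∀ z, HasFDerivAt g (∑ i, (-(a i z) / σ ^ 2) • (innerSL ℝ (z - μ i))) z :=
    fun z => HasFDerivAt.fun_sum (fun i _ => hda i z)
  -- derivative of F = -log g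
  have hdF : ∀ z : EuclideanSpace ℝ (Fin d),
      HasFDerivAt (fun z => -Real.log (∑ i, w i *
          (c * Real.exp (-‖z - μ i‖ ^ 2 / (2 * σ ^ 2)))))
        ((g z * σ ^ 2)⁻¹ • ∑ i, a i z • innerSL ℝ (z - μ i)) z := by
    intro z
    have h := ((hdg z).log (ne_of_gt (hgpos z))).neg
    apply h.congr_fderiv
    ext u
    simp only [ContinuousLinearMap.neg_apply, ContinuousLinearMap.smul_apply,
      ContinuousLinearMap.sum_apply, innerSL_apply_apply, smul_eq_mul]
    rw [Finset.mul_sum, Finset.mul_sum, ← Finset.sum_neg_distrib]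
    exact Finset.sum_congr rfl fun i _ => by ring
  -- rewrite the inner fderiv
  have hkey : (fun y => fderiv ℝ (fun z => -Real.log (∑ i, w i *
          (c * Real.exp (-‖z - μ i‖ ^ 2 / (2 * σ ^ 2))))) y v)
      = fun y => (g y * σ ^ 2)⁻¹ * ∑ i, a i y * ⟪y - μ i, v⟫ := by
    funext y
    rw [(hdF y).fderiv]
    simp only [ContinuousLinearMap.smul_apply, ContinuousLinearMap.sum_apply,
      innerSL_apply_apply, smul_eq_mul, ContinuousLinearMap.coe_smul', Pi.smul_apply]
  rw [hkey]
  -- second derivative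
  have hm : HasFDerivAt (fun y => g y * σ ^ 2)
      (σ ^ 2 • ∑ i, (-(a i x) / σ ^ 2) • (innerSL ℝ (x - μ i))) x :=
    (hdg x).mul_const (σ ^ 2)
  have hmx : g x * σ ^ 2 ≠ 0 := ne_of_gt (mul_pos (hgpos x) hQ)
  have hinv := (hasDerivAt_inv hmx).comp_hasFDerivAt x hm
  have hl : ∀ i : Fin N, HasFDerivAt (fun y : EuclideanSpace ℝ (Fin d) => ⟪y - μ i, v⟫)
      ((fderivInnerCLM ℝ (x - μ i, v)).comp
        ((ContinuousLinearMap.id ℝ (EuclideanSpace ℝ (Fin d))).prod 0)) x := by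
    intro i
    exact ((hasFDerivAt_id x).sub_const (μ i)).inner ℝ (hasFDerivAt_const v x)
  have hS := HasFDerivAt.fun_sum (u := Finset.univ)
      (fun (i : Fin N) _ => (hda i x).fun_mul (hl i))
  have htot := hinv.fun_mul hS
  have hval : fderiv ℝ (fun y => (g y * σ ^ 2)⁻¹ * ∑ i, a i y * ⟪y - μ i, v⟫) x = _ :=
    htot.fderiv
  rw [hval]
  simp only [ContinuousLinearMap.add_apply, ContinuousLinearMap.smul_apply,
    ContinuousLinearMap.sum_apply, ContinuousLinearMap.comp_apply,
    ContinuousLinearMap.prod_apply, ContinuousLinearMap.id_apply,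
    ContinuousLinearMap.zero_apply, fderivInnerCLM_apply, innerSL_apply_apply, smul_eq_mul,
    ContinuousLinearMap.coe_smul', Pi.smul_apply, inner_zero_right, add_zero,
    Function.comp_apply, neg_smul, ContinuousLinearMap.neg_apply]
  -- Cauchy–Schwarz bound on pairwise differences
  have hsij : ∀ i j : Fin N, (⟪x - μ i, v⟫ - ⟪x - μ j, v⟫) ^ 2 ≤ D * ‖v‖ ^ 2 := by
    intro i j
    have h1 : ⟪x - μ i, v⟫ - ⟪x - μ j, v⟫ = ⟪μ j - μ i, v⟫ := by
      rw [← inner_sub_left]; congr 1; abel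
    rw [h1]
    have h2 : |⟪μ j - μ i, v⟫| ≤ ‖μ j - μ i‖ * ‖v‖ := abs_real_inner_le_norm _ _
    calc ⟪μ j - μ i, v⟫ ^ 2 ≤ (‖μ j - μ i‖ * ‖v‖) ^ 2 := by
          rw [← sq_abs]; exact pow_le_pow_left₀ (abs_nonneg _) h2 2
      _ = ‖μ j - μ i‖ ^ 2 * ‖v‖ ^ 2 := by ring
      _ ≤ D * ‖v‖ ^ 2 := mul_le_mul_of_nonneg_right (hD j i) (sq_nonneg _)
  have key := var_bound_aux (fun i => a i x) (fun i => ⟪x - μ i, v⟫) (D * ‖v‖ ^ 2)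
      (fun i => (hapos i x).le) hsij
  beta_reduce at key
  -- rewrite the two sums
  have e4 : ∑ i : Fin N, (a i x * (0 + ⟪v, v⟫) + ⟪x - μ i, v⟫ * (-a i x / σ ^ 2 * ⟪x - μ i, v⟫))
      = ‖v‖ ^ 2 * (∑ i, a i x) - (∑ i, a i x * ⟪x - μ i, v⟫ ^ 2) / σ ^ 2 := by
    rw [Finset.mul_sum, Finset.sum_div, ← Finset.sum_sub_distrib]
    refine Finset.sum_congr rfl fun i _ => ?_
    rw [real_inner_self_eq_norm_sq]; ring
  have e5 : ∑ i : Fin N, -a i x / σ ^ 2 * ⟪x - μ i, v⟫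
      = (∑ i, -(a i x * ⟪x - μ i, v⟫)) / σ ^ 2 := by
    rw [Finset.sum_div]; exact Finset.sum_congr rfl fun i _ => by ring
  rw [Finset.sum_neg_distrib] at e5
  rw [e4, e5]
  have hAe : g x = ∑ i, a i x := rfl
  set A := g x with hA
  set T := ∑ i, a i x * ⟪x - μ i, v⟫ ^ 2 with hT
  set S := ∑ i, a i x * ⟪x - μ i, v⟫ with hS
  rw [← hAe]
  have hApos : 0 < A := hgpos x
  have hAne : A ≠ 0 := ne_of_gt hApos
  have hσne : σ ≠ 0 := ne_of_gt hσ
  rw [← sub_nonneg]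
  rw [← hAe] at key
  have expr_eq : (A * σ ^ 2)⁻¹ * (‖v‖ ^ 2 * A - T / σ ^ 2) +
      S * -(((A * σ ^ 2) ^ 2)⁻¹ * (σ ^ 2 * (-S / σ ^ 2))) -
      (1 / σ ^ 2 - D / (2 * σ ^ 4)) * ‖v‖ ^ 2
      = (D * ‖v‖ ^ 2 / 2 * A ^ 2 - (T * A - S ^ 2)) / (A ^ 2 * σ ^ 4) := by
    field_simp
    ring
  rw [expr_eq]
  apply div_nonneg
  · linarith [key]
  · positivity
end

section
/- Let p_s = ρ₀ * N(0, 2sI) for s ∈ [0, S], where ρ₀ is a mixture of Gaussians Σᵢ wᵢ N(μᵢ, σ²I). Then for every s ∈ [0,S], ∫ ‖∇ log p_s‖² dp_s ≤ d/(σ² + 2s), and consequently S ∫₀^S ‖∇ log p_s‖²_{L²(p_s)} ds ≤ (Sd/2) log(1 + 2S/σ²). -/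
open MeasureTheory Real

/-- Density of the Gaussian mixture `Σᵢ wᵢ N(μᵢ, τ I)` on `ℝ^d`. -/
noncomputable def mixDensity (d N : ℕ) (w : Fin N → ℝ)
    (μ : Fin N → EuclideanSpace ℝ (Fin d)) (τ : ℝ)
    (x : EuclideanSpace ℝ (Fin d)) : ℝ :=
  ∑ i, w i * ((2 * Real.pi * τ) ^ (-(d : ℝ) / 2) * Real.exp (-‖x - μ i‖ ^ 2 / (2 * τ)))

section AuxStmt19
open Filter

section OneD
variable {b : ℝ}

lemma integrable_gauss1 (hb : 0 < b) :
    Integrable fun x : ℝ => Real.exp (-b * x ^ 2) := integrable_exp_neg_mul_sq hb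

lemma integrable_sq_gauss1 (hb : 0 < b) :
    Integrable fun x : ℝ => x ^ 2 * Real.exp (-b * x ^ 2) := by
  have := integrable_rpow_mul_exp_neg_mul_sq hb (s := 2) (by norm_num)
  simpa [Real.rpow_natCast] using this

lemma integral_sq_gauss_Ioi {b : ℝ} (hb : 0 < b) :
    ∫ x in Set.Ioi (0:ℝ), x ^ 2 * Real.exp (-b * x ^ 2) = Real.sqrt (π / b) / (4 * b) := by
  -- G x = x * exp(-b x^2), G' x = exp(-b x^2) - 2*b*(x^2 * exp(-b x^2))
  set G : ℝ → ℝ := fun x => x * Real.exp (-b * x ^ 2) with hG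
  have hderiv : ∀ x : ℝ, HasDerivAt G (Real.exp (-b * x ^ 2) - 2 * b * (x ^ 2 * Real.exp (-b * x ^ 2))) x := by
    intro x
    have h1 : HasDerivAt (fun x : ℝ => -b * x ^ 2) (-b * (2 * x)) x := by
      simpa using ((hasDerivAt_pow 2 x).const_mul (-b))
    have h2 := h1.exp
    have h3 := (hasDerivAt_id x).mul h2
    convert! h3 using 1
    simp only [id]
    ring
  have hint : IntegrableOn (fun x : ℝ => Real.exp (-b * x ^ 2) - 2 * b * (x ^ 2 * Real.exp (-b * x ^ 2))) (Set.Ioi 0) := by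
    exact (((integrable_gauss1 hb).sub (((integrable_sq_gauss1 hb)).const_mul (2*b))).restrict)
  have htend : Tendsto G atTop (nhds 0) := by
    have h0 := rpow_mul_exp_neg_mul_sq_isLittleO_exp_neg hb 1
    have h1 : Tendsto (fun x : ℝ => Real.exp (-(1/2) * x)) atTop (nhds 0) := by
      have ha : Tendsto (fun x : ℝ => -(1/2) * x) atTop atBot := by
        have h' : Tendsto (fun x : ℝ => (1/2) * x) atTop atTop :=
          tendsto_id.const_mul_atTop (by norm_num : (0:ℝ) < 1/2)
        have h2 := tendsto_neg_atTop_atBot.comp h'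
        exact h2.congr fun x => by simp [Function.comp]
      exact Real.tendsto_exp_atBot.comp ha
    have h2 := h0.tendsto_zero_of_tendsto h1
    refine h2.congr' ?_
    filter_upwards [eventually_gt_atTop (0:ℝ)] with x hx
    simp [hG, Real.rpow_one]
  have := integral_Ioi_of_hasDerivAt_of_tendsto
      (f := G) (a := 0)
      (hderiv 0).continuousAt.continuousWithinAt
      (fun x _ => hderiv x) hint htend
  have hG0 : G 0 = 0 := by simp [hG]
  rw [hG0, sub_zero] at this
  have hsplit : ∫ x in Set.Ioi (0:ℝ), (Real.exp (-b * x ^ 2) - 2 * b * (x ^ 2 * Real.exp (-b * x ^ 2)))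
      = (∫ x in Set.Ioi (0:ℝ), Real.exp (-b * x ^ 2)) - 2 * b * ∫ x in Set.Ioi (0:ℝ), x ^ 2 * Real.exp (-b * x ^ 2) := by
    rw [integral_sub ((integrable_gauss1 hb).restrict) (((integrable_sq_gauss1 hb).const_mul (2*b)).restrict),
      integral_const_mul]
  rw [hsplit, integral_gaussian_Ioi] at this
  have : 2 * b * ∫ x in Set.Ioi (0:ℝ), x ^ 2 * Real.exp (-b * x ^ 2) = Real.sqrt (π / b) / 2 := by linarith
  field_simp at this ⊢
  linarith

lemma integral_sq_gauss (hb : 0 < b) :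
    ∫ x : ℝ, x ^ 2 * Real.exp (-b * x ^ 2) = Real.sqrt (π / b) / (2 * b) := by
  have habs : (fun x : ℝ => x ^ 2 * Real.exp (-b * x ^ 2))
      = fun x : ℝ => |x| ^ 2 * Real.exp (-b * |x| ^ 2) := by
    funext x; rw [sq_abs]
  rw [habs, integral_comp_abs (f := fun t : ℝ => t ^ 2 * Real.exp (-b * t ^ 2)),
    integral_sq_gauss_Ioi hb]
  field_simp
  ring

end OneD

section Tau
variable {τ : ℝ}

/-- `∫ exp(-x²/(2τ)) = √(2πτ)` -/
lemma integral_gauss_tau (hτ : 0 < τ) :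
    ∫ x : ℝ, Real.exp (-x ^ 2 / (2 * τ)) = Real.sqrt (2 * π * τ) := by
  have h : (fun x : ℝ => Real.exp (-x ^ 2 / (2 * τ))) = fun x : ℝ => Real.exp (-(2*τ)⁻¹ * x ^ 2) := by
    funext x; congr 1; field_simp
  rw [h, integral_gaussian]
  congr 1
  field_simp

lemma integral_sq_gauss_tau (hτ : 0 < τ) :
    ∫ x : ℝ, x ^ 2 * Real.exp (-x ^ 2 / (2 * τ)) = τ * Real.sqrt (2 * π * τ) := by
  have h : (fun x : ℝ => x ^ 2 * Real.exp (-x ^ 2 / (2 * τ)))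
      = fun x : ℝ => x ^ 2 * Real.exp (-(2*τ)⁻¹ * x ^ 2) := by
    funext x; congr 2; field_simp
  rw [h, integral_sq_gauss (by positivity)]
  rw [show π / (2*τ)⁻¹ = 2 * π * τ by field_simp]
  field_simp

lemma integrable_gauss_tau (hτ : 0 < τ) :
    Integrable fun x : ℝ => Real.exp (-x ^ 2 / (2 * τ)) := by
  have h : (fun x : ℝ => Real.exp (-x ^ 2 / (2 * τ))) = fun x : ℝ => Real.exp (-(2*τ)⁻¹ * x ^ 2) := by
    funext x; congr 1; field_simp
  rw [h]; exact integrable_gauss1 (by positivity)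

lemma integrable_sq_gauss_tau (hτ : 0 < τ) :
    Integrable fun x : ℝ => x ^ 2 * Real.exp (-x ^ 2 / (2 * τ)) := by
  have h : (fun x : ℝ => x ^ 2 * Real.exp (-x ^ 2 / (2 * τ)))
      = fun x : ℝ => x ^ 2 * Real.exp (-(2*τ)⁻¹ * x ^ 2) := by
    funext x; congr 2; field_simp
  rw [h]; exact integrable_sq_gauss1 (by positivity)

end Tau

section Multi
variable {d : ℕ} {τ : ℝ}

local notation "E" => EuclideanSpace ℝ (Fin d)

lemma normsq_eq (x : E) : ‖x‖ ^ 2 = ∑ i, x i ^ 2 := by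
  rw [EuclideanSpace.norm_eq, Real.sq_sqrt]
  · simp
  · positivity

lemma transfer_integral (g : ℝ → ℝ) :
    ∫ x : E, g (‖x‖ ^ 2) = ∫ y : Fin d → ℝ, g (∑ i, y i ^ 2) := by
  have h := (EuclideanSpace.volume_preserving_symm_measurableEquiv_toLp (Fin d)).integral_comp
    (MeasurableEquiv.toLp 2 (Fin d → ℝ)).symm.measurableEmbedding
    (fun y : Fin d → ℝ => g (∑ i, y i ^ 2))
  rw [← h]
  congr 1
  funext x
  congr 1
  rw [normsq_eq]
  rfl

lemma transfer_integrable (g : ℝ → ℝ) :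
    Integrable (fun x : E => g (‖x‖ ^ 2)) ↔ Integrable (fun y : Fin d → ℝ => g (∑ i, y i ^ 2)) := by
  have h := (EuclideanSpace.volume_preserving_symm_measurableEquiv_toLp (Fin d)).integrable_comp_emb
    (MeasurableEquiv.toLp 2 (Fin d → ℝ)).symm.measurableEmbedding
    (g := fun y : Fin d → ℝ => g (∑ i, y i ^ 2))
  rw [← h]
  constructor <;> intro hi <;> refine hi.congr (Filter.Eventually.of_forall fun x => ?_) <;>
    · show _ = _
      simp only [Function.comp]
      congr 1
      rw [normsq_eq]
      congr 1

lemma exp_sum_eq (y : Fin d → ℝ) :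
    Real.exp (-(∑ i, y i ^ 2) / (2 * τ)) = ∏ i, Real.exp (-y i ^ 2 / (2 * τ)) := by
  rw [← Real.exp_sum]
  congr 1
  rw [← Finset.sum_div]
  congr 1
  rw [← Finset.sum_neg_distrib]

lemma M_norm (hτ : 0 < τ) :
    ∫ x : E, Real.exp (-‖x‖ ^ 2 / (2 * τ)) = Real.sqrt (2 * π * τ) ^ d := by
  rw [transfer_integral (fun t : ℝ => Real.exp (-t / (2 * τ)))]
  simp_rw [exp_sum_eq]
  rw [volume_pi, MeasureTheory.integral_fintype_prod_eq_pow (ι := Fin d) (fun t : ℝ => Real.exp (-t ^ 2 / (2 * τ)))]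
  rw [integral_gauss_tau hτ]
  simp

lemma update_apply_eq (f h : ℝ → ℝ) (j : Fin d) (y : Fin d → ℝ) :
    (fun i : Fin d => (Function.update (fun _ : Fin d => f) j h i) (y i))
      = Function.update (fun i : Fin d => f (y i)) j (h (y j)) := by
  funext i
  by_cases hij : i = j
  · subst hij; simp
  · simp [Function.update_of_ne hij]

lemma M_sq_piece (hτ : 0 < τ) (j : Fin d) :
    ∫ y : Fin d → ℝ, (y j) ^ 2 * ∏ i, Real.exp (-(y i) ^ 2 / (2 * τ))
      = (τ * Real.sqrt (2 * π * τ)) * Real.sqrt (2 * π * τ) ^ (d - 1) := by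
  classical
  set f : ℝ → ℝ := fun t => Real.exp (-t ^ 2 / (2 * τ)) with hf
  set h : ℝ → ℝ := fun t => t ^ 2 * Real.exp (-t ^ 2 / (2 * τ)) with hh
  have e1 : ∀ y : Fin d → ℝ, (y j) ^ 2 * ∏ i, f (y i)
      = ∏ i, (Function.update (fun _ : Fin d => f) j h i) (y i) := by
    intro y
    rw [update_apply_eq, Finset.prod_update_of_mem (Finset.mem_univ j)]
    rw [← Finset.mul_prod_erase Finset.univ (fun i => f (y i)) (Finset.mem_univ j)]
    rw [Finset.sdiff_singleton_eq_erase]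
    show y j ^ 2 * (f (y j) * _) = (y j ^ 2 * f (y j)) * _
    ring
  rw [show (fun y : Fin d → ℝ => y j ^ 2 * ∏ i, Real.exp (-(y i) ^ 2 / (2 * τ)))
      = fun y => ∏ i, (Function.update (fun _ : Fin d => f) j h i) (y i) from funext e1]
  rw [volume_pi, MeasureTheory.integral_fintype_prod_eq_prod (ι := Fin d) (Function.update (fun _ : Fin d => f) j h)]
  have e2 : ∀ i : Fin d, (∫ x : ℝ, Function.update (fun _ : Fin d => f) j h i x)
      = Function.update (fun _ : Fin d => ∫ x : ℝ, f x) j (∫ x : ℝ, h x) i := by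
    intro i
    by_cases hij : i = j
    · subst hij; simp
    · simp [Function.update_of_ne hij]
  rw [Finset.prod_congr rfl (fun i _ => e2 i)]
  rw [Finset.prod_update_of_mem (Finset.mem_univ j)]
  rw [Finset.sdiff_singleton_eq_erase, Finset.prod_const,
    Finset.card_erase_of_mem (Finset.mem_univ j), Finset.card_univ, Fintype.card_fin]
  rw [show (∫ x : ℝ, h x) = τ * Real.sqrt (2 * π * τ) from integral_sq_gauss_tau hτ,
    show (∫ x : ℝ, f x) = Real.sqrt (2 * π * τ) from integral_gauss_tau hτ]

lemma integrable_pi_piece (hτ : 0 < τ) (j : Fin d) :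
    Integrable (fun y : Fin d → ℝ => (y j) ^ 2 * ∏ i, Real.exp (-(y i) ^ 2 / (2 * τ))) := by
  classical
  set f : ℝ → ℝ := fun t => Real.exp (-t ^ 2 / (2 * τ)) with hf
  set h : ℝ → ℝ := fun t => t ^ 2 * Real.exp (-t ^ 2 / (2 * τ)) with hh
  have e1 : ∀ y : Fin d → ℝ, (y j) ^ 2 * ∏ i, f (y i)
      = ∏ i, (Function.update (fun _ : Fin d => f) j h i) (y i) := by
    intro y
    rw [update_apply_eq, Finset.prod_update_of_mem (Finset.mem_univ j)]
    rw [← Finset.mul_prod_erase Finset.univ (fun i => f (y i)) (Finset.mem_univ j)]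
    rw [Finset.sdiff_singleton_eq_erase]
    show y j ^ 2 * (f (y j) * _) = (y j ^ 2 * f (y j)) * _
    ring
  have : (fun y : Fin d → ℝ => (y j) ^ 2 * ∏ i, f (y i))
      = fun y : Fin d → ℝ => ∏ i, (Function.update (fun _ : Fin d => f) j h i) (y i) := funext e1
  rw [this]
  refine Integrable.fintype_prod (f := Function.update (fun _ : Fin d => f) j h) (fun i => ?_)
  by_cases hij : i = j
  · subst hij; simp only [Function.update_self, hh]; exact integrable_sq_gauss_tau hτ
  · simp only [Function.update_of_ne hij, hf]; exact integrable_gauss_tau hτ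

lemma pi_sq_expand (y : Fin d → ℝ) :
    (∑ i, y i ^ 2) * Real.exp (-(∑ i, y i ^ 2) / (2 * τ))
      = ∑ j, (y j) ^ 2 * ∏ i, Real.exp (-(y i) ^ 2 / (2 * τ)) := by
  rw [exp_sum_eq, Finset.sum_mul]

lemma M_sq (hτ : 0 < τ) :
    ∫ x : E, ‖x‖ ^ 2 * Real.exp (-‖x‖ ^ 2 / (2 * τ))
      = d * τ * Real.sqrt (2 * π * τ) ^ d := by
  rw [transfer_integral (fun t : ℝ => t * Real.exp (-t / (2 * τ)))]
  simp_rw [pi_sq_expand (τ := τ)]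
  rw [MeasureTheory.integral_finset_sum _ (fun j _ => integrable_pi_piece hτ j)]
  simp_rw [M_sq_piece hτ]
  rw [Finset.sum_const, Finset.card_univ, Fintype.card_fin, nsmul_eq_mul]
  rcases Nat.eq_zero_or_pos d with hd | hd
  · subst hd; simp
  · have : Real.sqrt (2 * π * τ) ^ d = Real.sqrt (2 * π * τ) * Real.sqrt (2 * π * τ) ^ (d - 1) := by
      rw [← pow_succ']
      congr 1
      omega
    rw [this]
    ring

lemma integrable_M_sq (hτ : 0 < τ) :
    Integrable (fun x : E => ‖x‖ ^ 2 * Real.exp (-‖x‖ ^ 2 / (2 * τ))) := by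
  rw [transfer_integrable (fun t : ℝ => t * Real.exp (-t / (2 * τ)))]
  have : (fun y : Fin d → ℝ => (∑ i, y i ^ 2) * Real.exp (-(∑ i, y i ^ 2) / (2 * τ)))
      = fun y : Fin d → ℝ => ∑ j, (y j) ^ 2 * ∏ i, Real.exp (-(y i) ^ 2 / (2 * τ)) :=
    funext (pi_sq_expand (τ := τ))
  rw [this]
  exact MeasureTheory.integrable_finset_sum _ (fun j _ => integrable_pi_piece hτ j)

lemma integrable_M (hτ : 0 < τ) :
    Integrable (fun x : E => Real.exp (-‖x‖ ^ 2 / (2 * τ))) := by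
  rw [transfer_integrable (fun t : ℝ => Real.exp (-t / (2 * τ)))]
  have : (fun y : Fin d → ℝ => Real.exp (-(∑ i, y i ^ 2) / (2 * τ)))
      = fun y : Fin d → ℝ => ∏ i, Real.exp (-(y i) ^ 2 / (2 * τ)) := funext exp_sum_eq
  rw [this]
  exact Integrable.fintype_prod (f := fun _ : Fin d => fun t : ℝ => Real.exp (-t ^ 2 / (2 * τ)))
    (fun _ => integrable_gauss_tau hτ)

end Multi

section Translate
variable {d : ℕ} {τ : ℝ}

local notation "E" => EuclideanSpace ℝ (Fin d)
local notation "gc" τ => (2 * π * τ) ^ (-(d:ℝ)/2)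

lemma c_norm (hτ : 0 < τ) :
    ((2 * π * τ) ^ (-(d:ℝ)/2) : ℝ) * Real.sqrt (2 * π * τ) ^ d = 1 := by
  have h2 : (0:ℝ) < 2 * π * τ := by positivity
  rw [← Real.rpow_natCast (Real.sqrt (2 * π * τ)) d, Real.sqrt_eq_rpow,
    ← Real.rpow_mul h2.le, ← Real.rpow_add h2]
  rw [show (-(d:ℝ)/2 + 1/2 * (d:ℕ)) = 0 by push_cast; ring, Real.rpow_zero]

lemma c_pos (hτ : 0 < τ) : (0:ℝ) < (2 * π * τ) ^ (-(d:ℝ)/2) :=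
  Real.rpow_pos_of_pos (by positivity) _

lemma integral_gauss_translate (hτ : 0 < τ) (v : E) :
    ∫ x : E, ((2 * π * τ) ^ (-(d:ℝ)/2) : ℝ) * Real.exp (-‖x - v‖ ^ 2 / (2 * τ)) = 1 := by
  rw [integral_sub_right_eq_self
    (fun z : E => ((2 * π * τ) ^ (-(d:ℝ)/2) : ℝ) * Real.exp (-‖z‖ ^ 2 / (2 * τ))) v]
  rw [MeasureTheory.integral_const_mul, M_norm hτ, c_norm hτ]

lemma integral_sq_gauss_translate (hτ : 0 < τ) (v : E) :
    ∫ x : E, ‖x - v‖ ^ 2 * (((2 * π * τ) ^ (-(d:ℝ)/2) : ℝ) * Real.exp (-‖x - v‖ ^ 2 / (2 * τ)))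
      = d * τ := by
  rw [integral_sub_right_eq_self
    (fun z : E => ‖z‖ ^ 2 * (((2 * π * τ) ^ (-(d:ℝ)/2) : ℝ) * Real.exp (-‖z‖ ^ 2 / (2 * τ)))) v]
  have : ∀ z : E, ‖z‖ ^ 2 * (((2 * π * τ) ^ (-(d:ℝ)/2) : ℝ) * Real.exp (-‖z‖ ^ 2 / (2 * τ)))
      = ((2 * π * τ) ^ (-(d:ℝ)/2) : ℝ) * (‖z‖ ^ 2 * Real.exp (-‖z‖ ^ 2 / (2 * τ))) := by
    intro z; ring
  simp_rw [this]
  rw [MeasureTheory.integral_const_mul, M_sq hτ]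
  have h := c_norm (d := d) hτ
  calc ((2 * π * τ) ^ (-(d:ℝ)/2) : ℝ) * ((d:ℝ) * τ * Real.sqrt (2 * π * τ) ^ d)
      = ((d:ℝ) * τ) * (((2 * π * τ) ^ (-(d:ℝ)/2) : ℝ) * Real.sqrt (2 * π * τ) ^ d) := by ring
    _ = (d:ℝ) * τ := by rw [h, mul_one]

lemma integrable_sq_gauss_translate (hτ : 0 < τ) (v : E) :
    Integrable (fun x : E =>
      ‖x - v‖ ^ 2 * (((2 * π * τ) ^ (-(d:ℝ)/2) : ℝ) * Real.exp (-‖x - v‖ ^ 2 / (2 * τ)))) := by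
  have base : Integrable (fun z : E =>
      ‖z‖ ^ 2 * (((2 * π * τ) ^ (-(d:ℝ)/2) : ℝ) * Real.exp (-‖z‖ ^ 2 / (2 * τ)))) := by
    have : ∀ z : E, ‖z‖ ^ 2 * (((2 * π * τ) ^ (-(d:ℝ)/2) : ℝ) * Real.exp (-‖z‖ ^ 2 / (2 * τ)))
        = ((2 * π * τ) ^ (-(d:ℝ)/2) : ℝ) * (‖z‖ ^ 2 * Real.exp (-‖z‖ ^ 2 / (2 * τ))) := by
      intro z; ring
    simp_rw [this]
    exact (integrable_M_sq hτ).const_mul _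
  exact base.comp_sub_right v

end Translate

section Grad
variable {d N : ℕ} {w : Fin N → ℝ} {μ : Fin N → EuclideanSpace ℝ (Fin d)} {τ : ℝ}

local notation "E" => EuclideanSpace ℝ (Fin d)

lemma hasFDerivAt_normsq (v x : E) :
    HasFDerivAt (fun z : E => ‖z - v‖ ^ 2)
      ((InnerProductSpace.toDual ℝ (EuclideanSpace ℝ (Fin d))) ((2:ℝ) • (x - v))) x := by
  have h0 : HasFDerivAt (fun z : E => z - v) (ContinuousLinearMap.id ℝ (EuclideanSpace ℝ (Fin d))) x :=
    (hasFDerivAt_id x).sub_const v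
  have h1 := HasFDerivAt.inner ℝ h0 h0
  have hfun : (fun z : E => ‖z - v‖ ^ 2) = fun z : E => (inner ℝ (z - v) (z - v) : ℝ) := by
    funext z; rw [real_inner_self_eq_norm_sq]
  rw [hfun]
  convert! h1 using 1
  ext u
  simp only [ContinuousLinearMap.coe_comp', Function.comp_apply, ContinuousLinearMap.prod_apply,
    ContinuousLinearMap.coe_id', id_eq, fderivInnerCLM_apply, InnerProductSpace.toDual_apply_apply,
    real_inner_smul_left]
  rw [real_inner_comm u (x - v)]
  ring

lemma mix_pos (hτ : 0 < τ) (hw : ∀ i, 0 < w i) (hN : 0 < N) (x : E) :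
    0 < mixDensity d N w μ τ x := by
  have : Nonempty (Fin N) := ⟨⟨0, hN⟩⟩
  unfold mixDensity
  refine Finset.sum_pos (fun i _ => ?_) Finset.univ_nonempty
  have h1 : (0:ℝ) < (2 * π * τ) ^ (-(d:ℝ)/2) := Real.rpow_pos_of_pos (by positivity) _
  have := hw i
  positivity

/-- The gradient of `log (mixDensity)`. -/
noncomputable def mixGrad (d N : ℕ) (w : Fin N → ℝ) (μ : Fin N → EuclideanSpace ℝ (Fin d))
    (τ : ℝ) (x : EuclideanSpace ℝ (Fin d)) : EuclideanSpace ℝ (Fin d) :=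
  (mixDensity d N w μ τ x)⁻¹ •
    ∑ i, (w i * ((2 * Real.pi * τ) ^ (-(d : ℝ) / 2) * Real.exp (-‖x - μ i‖ ^ 2 / (2 * τ))) * τ⁻¹)
      • (μ i - x)

lemma hasGradientAt_log_mix (hτ : 0 < τ) (hw : ∀ i, 0 < w i) (hN : 0 < N) (x : E) :
    HasGradientAt (fun z => Real.log (mixDensity d N w μ τ z)) (mixGrad d N w μ τ x) x := by
  set c : ℝ := (2 * π * τ) ^ (-(d:ℝ)/2) with hc
  have key : ∀ i : Fin N, HasFDerivAt (fun z : E => w i * (c * Real.exp (-‖z - μ i‖ ^ 2 / (2 * τ))))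
      ((InnerProductSpace.toDual ℝ (EuclideanSpace ℝ (Fin d)))
        ((w i * (c * Real.exp (-‖x - μ i‖ ^ 2 / (2 * τ))) * τ⁻¹) • (μ i - x))) x := by
    intro i
    have h1 := hasFDerivAt_normsq (μ i) x
    have h2 := h1.const_mul (-(2*τ)⁻¹)
    have hfun : (fun z : E => -(2*τ)⁻¹ * ‖z - μ i‖ ^ 2) = fun z : E => -‖z - μ i‖ ^ 2 / (2 * τ) := by
      funext z; ring
    rw [hfun] at h2
    have h3 := h2.exp
    have h4 := h3.const_mul (w i * c)
    have hfun2 : (fun z : E => (w i * c) * Real.exp (-‖z - μ i‖ ^ 2 / (2 * τ)))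
        = fun z : E => w i * (c * Real.exp (-‖z - μ i‖ ^ 2 / (2 * τ))) := by
      funext z; ring
    rw [hfun2] at h4
    convert! h4 using 1
    ext u
    simp only [ContinuousLinearMap.smul_apply, InnerProductSpace.toDual_apply_apply,
      real_inner_smul_left, smul_eq_mul]
    rw [show (μ i - x : E) = -(x - μ i) from (neg_sub _ _).symm, inner_neg_left]
    have hτ' : τ ≠ 0 := hτ.ne'
    field_simp
  have hsum := HasFDerivAt.fun_sum (fun i (_ : i ∈ Finset.univ) => key i)
  have hp : HasFDerivAt (fun z : E => mixDensity d N w μ τ z)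
      ((InnerProductSpace.toDual ℝ (EuclideanSpace ℝ (Fin d)))
        (∑ i, (w i * (c * Real.exp (-‖x - μ i‖ ^ 2 / (2 * τ))) * τ⁻¹) • (μ i - x))) x := by
    rw [map_sum]
    exact hsum
  have hpos := mix_pos (μ := μ) hτ hw hN x
  have hlog := hp.log hpos.ne'
  rw [hasGradientAt_iff_hasFDerivAt]
  unfold mixGrad
  rw [_root_.map_smul]
  exact hlog

end Grad

section Bound
variable {d N : ℕ} {w : Fin N → ℝ} {μ : Fin N → EuclideanSpace ℝ (Fin d)} {τ : ℝ}

local notation "E" => EuclideanSpace ℝ (Fin d)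

lemma pointwise_bound (hτ : 0 < τ) (hw : ∀ i, 0 < w i) (hN : 0 < N) (x : E) :
    ‖mixGrad d N w μ τ x‖ ^ 2 * mixDensity d N w μ τ x ≤
      ∑ i, (w i * τ⁻¹ * τ⁻¹) *
        (‖x - μ i‖ ^ 2 * ((2 * π * τ) ^ (-(d:ℝ)/2) * Real.exp (-‖x - μ i‖ ^ 2 / (2 * τ)))) := by
  classical
  set c : ℝ := (2 * π * τ) ^ (-(d:ℝ)/2) with hc
  set a : Fin N → ℝ := fun i => w i * (c * Real.exp (-‖x - μ i‖ ^ 2 / (2 * τ))) with ha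
  have hapos : ∀ i, 0 < a i := by
    intro i
    have h1 : (0:ℝ) < c := Real.rpow_pos_of_pos (by positivity) _
    have := hw i
    positivity
  have hpx : mixDensity d N w μ τ x = ∑ i, a i := rfl
  have hppos : 0 < mixDensity d N w μ τ x := mix_pos hτ hw hN x
  set p : ℝ := mixDensity d N w μ τ x with hp
  set Q : ℝ := ∑ i, a i * (‖x - μ i‖ ^ 2 / τ ^ 2) with hQ
  have hQeq : Q = ∑ i, (w i * τ⁻¹ * τ⁻¹) *
      (‖x - μ i‖ ^ 2 * (c * Real.exp (-‖x - μ i‖ ^ 2 / (2 * τ)))) := by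
    refine Finset.sum_congr rfl (fun i _ => ?_)
    simp only [ha]
    field_simp
  rw [← hQeq]
  -- ‖V‖ ≤ T
  have hVT : ‖∑ i, (a i * τ⁻¹) • (μ i - x)‖ ≤ ∑ i, (a i * τ⁻¹) * ‖μ i - x‖ := by
    refine le_trans (norm_sum_le _ _) (Finset.sum_le_sum fun i _ => ?_)
    rw [norm_smul]
    have : |a i * τ⁻¹| = a i * τ⁻¹ :=
      abs_of_nonneg (mul_nonneg (hapos i).le (inv_nonneg.mpr hτ.le))
    simp only [Real.norm_eq_abs]
    rw [this]
  -- Cauchy-Schwarz: T^2 ≤ p * Q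
  have hCS : (∑ i, (a i * τ⁻¹) * ‖μ i - x‖) ^ 2 ≤ p * Q := by
    have key := Finset.sum_mul_sq_le_sq_mul_sq Finset.univ
      (fun i => Real.sqrt (a i)) (fun i => Real.sqrt (a i) * ‖μ i - x‖ / τ)
    have e1 : ∀ i : Fin N, Real.sqrt (a i) * (Real.sqrt (a i) * ‖μ i - x‖ / τ)
        = (a i * τ⁻¹) * ‖μ i - x‖ := by
      intro i
      rw [show Real.sqrt (a i) * (Real.sqrt (a i) * ‖μ i - x‖ / τ)
          = (Real.sqrt (a i) * Real.sqrt (a i)) * ‖μ i - x‖ * τ⁻¹ by ring,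
        Real.mul_self_sqrt (hapos i).le]
      ring
    have e2 : ∀ i : Fin N, Real.sqrt (a i) ^ 2 = a i := fun i => Real.sq_sqrt (hapos i).le
    have e3 : ∀ i : Fin N, (Real.sqrt (a i) * ‖μ i - x‖ / τ) ^ 2 = a i * (‖x - μ i‖ ^ 2 / τ ^ 2) := by
      intro i
      rw [div_pow, mul_pow, Real.sq_sqrt (hapos i).le, ← norm_neg (μ i - x), neg_sub]
      ring
    calc (∑ i, (a i * τ⁻¹) * ‖μ i - x‖) ^ 2
        = (∑ i, Real.sqrt (a i) * (Real.sqrt (a i) * ‖μ i - x‖ / τ)) ^ 2 := by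
          rw [Finset.sum_congr rfl (fun i _ => (e1 i).symm)]
      _ ≤ (∑ i, Real.sqrt (a i) ^ 2) * ∑ i, (Real.sqrt (a i) * ‖μ i - x‖ / τ) ^ 2 := key
      _ = p * Q := by
          rw [Finset.sum_congr rfl (fun i _ => e2 i), Finset.sum_congr rfl (fun i _ => e3 i),
            ← hQ, ← hpx]
  -- assemble
  have hgrad : ‖mixGrad d N w μ τ x‖ = p⁻¹ * ‖∑ i, (a i * τ⁻¹) • (μ i - x)‖ := by
    unfold mixGrad
    rw [norm_smul]
    simp only [Real.norm_eq_abs, abs_of_nonneg (inv_nonneg.mpr hppos.le)]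
    exact congrArg₂ _ (abs_of_nonneg (inv_nonneg.mpr hppos.le)) rfl
  have hT0 : (0:ℝ) ≤ ∑ i, (a i * τ⁻¹) * ‖μ i - x‖ :=
    Finset.sum_nonneg fun i _ =>
      mul_nonneg (mul_nonneg (hapos i).le (inv_nonneg.mpr hτ.le)) (norm_nonneg _)
  have hV2 : ‖∑ i, (a i * τ⁻¹) • (μ i - x)‖ ^ 2 ≤ p * Q := by
    calc ‖∑ i, (a i * τ⁻¹) • (μ i - x)‖ ^ 2
        ≤ (∑ i, (a i * τ⁻¹) * ‖μ i - x‖) ^ 2 := by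
          apply pow_le_pow_left₀ (norm_nonneg _) hVT
      _ ≤ p * Q := hCS
  rw [hgrad, mul_pow]
  calc p⁻¹ ^ 2 * ‖∑ i, (a i * τ⁻¹) • (μ i - x)‖ ^ 2 * p
      ≤ p⁻¹ ^ 2 * (p * Q) * p := by
        have h2 : (0:ℝ) ≤ p⁻¹ ^ 2 := by positivity
        exact mul_le_mul_of_nonneg_right (mul_le_mul_of_nonneg_left hV2 h2) hppos.le
    _ = Q := by
        field_simp

lemma part1_bound (hτ : 0 < τ) (hw : ∀ i, 0 < w i) (hN : 0 < N) (hsum : ∑ i, w i = 1) :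
    ∫ x : E, ‖mixGrad d N w μ τ x‖ ^ 2 * mixDensity d N w μ τ x ≤ d / τ := by
  set c : ℝ := (2 * π * τ) ^ (-(d:ℝ)/2) with hc
  set Q : E → ℝ := fun x => ∑ i, (w i * τ⁻¹ * τ⁻¹) *
      (‖x - μ i‖ ^ 2 * (c * Real.exp (-‖x - μ i‖ ^ 2 / (2 * τ)))) with hQ
  have hQint : Integrable Q := by
    refine MeasureTheory.integrable_finset_sum _ (fun i _ => ?_)
    exact (integrable_sq_gauss_translate hτ (μ i)).const_mul _
  have hQval : ∫ x : E, Q x = d / τ := by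
    rw [hQ, MeasureTheory.integral_finset_sum _ (fun i _ =>
      (integrable_sq_gauss_translate hτ (μ i)).const_mul _)]
    have : ∀ i : Fin N, (∫ x : E, (w i * τ⁻¹ * τ⁻¹) *
        (‖x - μ i‖ ^ 2 * (c * Real.exp (-‖x - μ i‖ ^ 2 / (2 * τ))))) = w i * (d / τ) := by
      intro i
      rw [MeasureTheory.integral_const_mul, integral_sq_gauss_translate hτ (μ i)]
      field_simp
    rw [Finset.sum_congr rfl (fun i _ => this i), ← Finset.sum_mul, hsum, one_mul]
  calc ∫ x : E, ‖mixGrad d N w μ τ x‖ ^ 2 * mixDensity d N w μ τ x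
      ≤ ∫ x : E, Q x := by
        refine MeasureTheory.integral_mono_of_nonneg (Filter.Eventually.of_forall fun x => ?_)
          hQint (Filter.Eventually.of_forall fun x => ?_)
        · have := mix_pos (μ := μ) hτ hw hN x
          positivity
        · exact pointwise_bound hτ hw hN x
    _ = d / τ := hQval

end Bound


end AuxStmt19

/-- For `p_s = ρ₀ * N(0, 2sI)` with `ρ₀ = Σᵢ wᵢ N(μᵢ, σ²I)` (so
`p_s = Σᵢ wᵢ N(μᵢ, (σ²+2s)I)`): for all `s ∈ [0,S]`,
`∫‖∇ log p_s‖² dp_s ≤ d/(σ²+2s)`, and hence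
`S ∫₀^S ‖∇ log p_s‖²_{L²(p_s)} ds ≤ (Sd/2) log(1 + 2S/σ²)`. -/
theorem stmt_19 (d N : ℕ) (hN : 0 < N) (σ S : ℝ) (hσ : 0 < σ) (hS : 0 < S)
    (w : Fin N → ℝ) (hw : ∀ i, 0 < w i) (hsum : ∑ i, w i = 1)
    (μ : Fin N → EuclideanSpace ℝ (Fin d)) :
    (∀ s ∈ Set.Icc (0:ℝ) S,
      (∫ x, ‖gradient (fun z => Real.log (mixDensity d N w μ (σ ^ 2 + 2 * s) z)) x‖ ^ 2 *
          mixDensity d N w μ (σ ^ 2 + 2 * s) x) ≤ d / (σ ^ 2 + 2 * s)) ∧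
    S * (∫ s in (0:ℝ)..S,
        ∫ x, ‖gradient (fun z => Real.log (mixDensity d N w μ (σ ^ 2 + 2 * s) z)) x‖ ^ 2 *
          mixDensity d N w μ (σ ^ 2 + 2 * s) x) ≤
      (S * d / 2) * Real.log (1 + 2 * S / σ ^ 2) := by
  have hτpos : ∀ s ∈ Set.Icc (0:ℝ) S, 0 < σ ^ 2 + 2 * s := by
    intro s hs
    have := hs.1
    nlinarith [sq_nonneg σ, hσ]
  have part1 : ∀ s ∈ Set.Icc (0:ℝ) S,
      (∫ x, ‖gradient (fun z => Real.log (mixDensity d N w μ (σ ^ 2 + 2 * s) z)) x‖ ^ 2 *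
          mixDensity d N w μ (σ ^ 2 + 2 * s) x) ≤ d / (σ ^ 2 + 2 * s) := by
    intro s hs
    have hτ : 0 < σ ^ 2 + 2 * s := hτpos s hs
    have hgr : (fun x : EuclideanSpace ℝ (Fin d) =>
        ‖gradient (fun z => Real.log (mixDensity d N w μ (σ ^ 2 + 2 * s) z)) x‖ ^ 2 *
          mixDensity d N w μ (σ ^ 2 + 2 * s) x)
        = fun x => ‖mixGrad d N w μ (σ ^ 2 + 2 * s) x‖ ^ 2 *
            mixDensity d N w μ (σ ^ 2 + 2 * s) x := by
      funext x
      rw [(hasGradientAt_log_mix hτ hw hN x).gradient]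
    rw [hgr]
    exact part1_bound hτ hw hN hsum
  refine ⟨part1, ?_⟩
  have hg_int : IntervalIntegrable (fun s => (d:ℝ) / (σ ^ 2 + 2 * s)) volume 0 S := by
    apply ContinuousOn.intervalIntegrable
    refine ContinuousOn.div continuousOn_const ?_ ?_
    · exact (continuous_const.add (continuous_const.mul continuous_id)).continuousOn
    · intro s hs
      rw [Set.uIcc_of_le hS.le] at hs
      exact (hτpos s hs).ne'
  have hgval : ∫ s in (0:ℝ)..S, (d:ℝ) / (σ ^ 2 + 2 * s)
      = ((d:ℝ)/2) * Real.log (1 + 2 * S / σ ^ 2) := by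
    have hF : ∀ s ∈ Set.uIcc (0:ℝ) S,
        HasDerivAt (fun t => ((d:ℝ)/2) * Real.log (σ ^ 2 + 2 * t)) ((d:ℝ)/(σ ^ 2 + 2 * s)) s := by
      intro s hs
      rw [Set.uIcc_of_le hS.le] at hs
      have h1 : HasDerivAt (fun t : ℝ => σ ^ 2 + 2 * t) 2 s := by
        simpa using ((hasDerivAt_id s).const_mul (2:ℝ)).const_add (σ ^ 2)
      have h2 := (h1.log (hτpos s hs).ne').const_mul ((d:ℝ)/2)
      convert! h2 using 1
      field_simp
    rw [intervalIntegral.integral_eq_sub_of_hasDerivAt hF hg_int]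
    have hpos1 : (0:ℝ) < σ ^ 2 + 2 * S := by nlinarith [hσ, hS]
    have hpos0 : (0:ℝ) < σ ^ 2 := by positivity
    rw [show σ ^ 2 + 2 * 0 = σ ^ 2 by ring]
    rw [← mul_sub, ← Real.log_div hpos1.ne' hpos0.ne']
    congr 2
    field_simp
  have hRHS0 : 0 ≤ (S * d / 2) * Real.log (1 + 2 * S / σ ^ 2) := by
    apply mul_nonneg
    · positivity
    · apply Real.log_nonneg
      have : 0 ≤ 2 * S / σ ^ 2 := by positivity
      linarith
  by_cases hfi : IntervalIntegrable (fun s =>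
      ∫ x, ‖gradient (fun z => Real.log (mixDensity d N w μ (σ ^ 2 + 2 * s) z)) x‖ ^ 2 *
        mixDensity d N w μ (σ ^ 2 + 2 * s) x) volume 0 S
  · have hmono := intervalIntegral.integral_mono_on hS.le hfi hg_int (fun s hs => part1 s hs)
    calc S * (∫ s in (0:ℝ)..S,
          ∫ x, ‖gradient (fun z => Real.log (mixDensity d N w μ (σ ^ 2 + 2 * s) z)) x‖ ^ 2 *
            mixDensity d N w μ (σ ^ 2 + 2 * s) x)
        ≤ S * (((d:ℝ)/2) * Real.log (1 + 2 * S / σ ^ 2)) := by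
          rw [← hgval]
          exact mul_le_mul_of_nonneg_left hmono hS.le
      _ = (S * d / 2) * Real.log (1 + 2 * S / σ ^ 2) := by ring
  · rw [intervalIntegral.integral_undef hfi]
    simpa using hRHS0
end
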